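/- arXiv:2307.11878 — 3 statements merged into one kernel-verified Lean document; each statement's English description precedes it below -/
import Mathlib

section
/- Suppose B is even. Let p be defined by p_j = p₀_j - δ for j ≤ B/2 and p_j = p₀_j + δ for j > B/2, where 0 < δ ≤ min_j p₀_j. Then p ∈ 𝒫(δ|p₀) and ∑_{j=1}^B (p_j - p₀_j)²/p₀_j = δ² ∑_{j=1}^B 1/p₀_j. Hence sup_{p ∈ 𝒫(δ|p₀)} ∑_j (p_j - p₀_j)²/p₀_j = δ² ∑_j 1/p₀_j when B is even. -/
open Finset

/-- The δ-resemblance region around a reference probability vector `p₀`. -/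
def resemblanceSet {B : ℕ} (δ : ℝ) (p₀ : Fin B → ℝ) : Set (Fin B → ℝ) :=
  {p | (∀ j, 0 ≤ p j) ∧ (∑ j, p j = 1) ∧ (∀ j, |p j - p₀ j| ≤ δ)}

theorem chiSq_sup_even {B : ℕ} (hB : Even B) (p₀ : Fin B → ℝ) (δ : ℝ)
    (hp₀pos : ∀ j, 0 < p₀ j) (hp₀1 : ∑ j, p₀ j = 1)
    (hδ : 0 < δ) (hδmin : ∀ j, δ ≤ p₀ j)
    (p : Fin B → ℝ)
    (hp : ∀ j : Fin B, p j = if (j : ℕ) < B / 2 then p₀ j - δ else p₀ j + δ) :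
    p ∈ resemblanceSet δ p₀ ∧
      (∑ j, (p j - p₀ j) ^ 2 / p₀ j) = δ ^ 2 * ∑ j, 1 / p₀ j ∧
      IsGreatest ((fun q : Fin B → ℝ => ∑ j, (q j - p₀ j) ^ 2 / p₀ j) ''
        resemblanceSet δ p₀) (δ ^ 2 * ∑ j, 1 / p₀ j) := by
  have hdiff : ∀ j, |p j - p₀ j| = δ := by
    intro j
    rw [hp j]
    split_ifs <;> simp [abs_of_nonneg hδ.le, abs_of_nonpos, hδ.le]
  have hsum1 : ∑ j, p j = 1 := by
    have : ∑ j, p j = ∑ j, (p₀ j + if (j : ℕ) < B / 2 then -δ else δ) := by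
      refine Finset.sum_congr rfl fun j _ => ?_
      rw [hp j]; split_ifs <;> ring
    rw [this, Finset.sum_add_distrib, hp₀1]
    have h2 : ∑ j : Fin B, (if (j : ℕ) < B / 2 then -δ else δ)
        = ∑ i ∈ Finset.range B, (if i < B / 2 then -δ else δ) :=
      Fin.sum_univ_eq_sum_range (fun i => if i < B / 2 then -δ else δ) B
    rw [h2, Finset.sum_ite, Finset.sum_const, Finset.sum_const]
    have hc : (Finset.range B).filter (fun i => i < B / 2) = Finset.range (B / 2) := by
      ext i
      simp only [Finset.mem_filter, Finset.mem_range]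
      exact ⟨fun h => h.2, fun h => ⟨lt_of_lt_of_le h (Nat.div_le_self _ _), h⟩⟩
    have hc2 : ((Finset.range B).filter (fun i => ¬ i < B / 2)).card = B - B / 2 := by
      rw [Finset.filter_not, Finset.card_sdiff_of_subset (Finset.filter_subset _ _), hc,
        Finset.card_range, Finset.card_range]
    rw [hc, hc2, Finset.card_range]
    obtain ⟨k, hk⟩ := hB
    have : B - B / 2 = B / 2 := by omega
    rw [this]; ring
  have hmem : p ∈ resemblanceSet δ p₀ := by
    refine ⟨fun j => ?_, hsum1, fun j => (hdiff j).le⟩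
    rw [hp j]
    split_ifs
    · linarith [hδmin j]
    · linarith [(hp₀pos j), hδ]
  have hval : (∑ j, (p j - p₀ j) ^ 2 / p₀ j) = δ ^ 2 * ∑ j, 1 / p₀ j := by
    rw [Finset.mul_sum]
    refine Finset.sum_congr rfl fun j _ => ?_
    have : (p j - p₀ j) ^ 2 = δ ^ 2 := by
      rw [← sq_abs, hdiff j]
    rw [this]; ring
  refine ⟨hmem, hval, ⟨⟨p, hmem, hval⟩, ?_⟩⟩
  rintro x ⟨q, ⟨hq0, hq1, hqδ⟩, rfl⟩
  rw [Finset.mul_sum]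
  refine Finset.sum_le_sum fun j _ => ?_
  have h1 : (q j - p₀ j) ^ 2 ≤ δ ^ 2 := by
    rw [← sq_abs]
    exact pow_le_pow_left₀ (abs_nonneg _) (hqδ j) 2
  have := (hp₀pos j)
  rw [div_le_iff₀ this]
  have h2 : δ ^ 2 * (1 / p₀ j) * p₀ j = δ ^ 2 := by field_simp
  rw [h2]; exact h1
end

section
/- Suppose B is odd. Then sup_{p ∈ 𝒫(δ|p₀)} ∑_{j=1}^B (p_j - p₀_j)²/p₀_j = δ² (∑_{j=1}^B 1/p₀_j − 1/p*), where p* = max_j p₀_j. -/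
open Finset

theorem chiSq_sup_odd {B : ℕ} (hB : Odd B) (hB3 : 3 ≤ B)
    (p₀ : Fin B → ℝ) (δ : ℝ)
    (hp₀pos : ∀ j, 0 < p₀ j) (hp₀1 : ∑ j, p₀ j = 1)
    (hδ : 0 < δ) (hδmin : ∀ j, δ ≤ p₀ j) :
    sSup ((fun p : Fin B → ℝ => ∑ j, (p j - p₀ j) ^ 2 / p₀ j) ''
        resemblanceSet δ p₀) =
      δ ^ 2 * ((∑ j, 1 / p₀ j) -
        1 / (Finset.univ.sup' ⟨⟨0, by omega⟩, Finset.mem_univ _⟩ p₀)) := by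
  have hne : (Finset.univ : Finset (Fin B)).Nonempty := ⟨⟨0, by omega⟩, Finset.mem_univ _⟩
  obtain ⟨js, -, hjs⟩ := Finset.exists_mem_eq_sup' hne p₀
  show _ = δ ^ 2 * ((∑ j, 1 / p₀ j) - 1 / (Finset.univ.sup' hne p₀))
  rw [hjs]
  set ps := p₀ js with hpsdef
  have hps : 0 < ps := hp₀pos js
  have hle : ∀ j, p₀ j ≤ ps := fun j => hjs ▸ Finset.le_sup' p₀ (mem_univ j)
  set T : ℝ := δ ^ 2 * ((∑ j, 1 / p₀ j) - 1 / ps) with hT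
  -- upper bound
  have hub : ∀ x ∈ ((fun p : Fin B → ℝ => ∑ j, (p j - p₀ j) ^ 2 / p₀ j) ''
      resemblanceSet δ p₀), x ≤ T := by
    rintro x ⟨p, ⟨hpos, hsum, hdev⟩, rfl⟩
    set e : Fin B → ℝ := fun j => p j - p₀ j with he
    have he0 : ∑ j, e j = 0 := by
      simp only [he, Finset.sum_sub_distrib, hsum, hp₀1, sub_self]
    have habs : ∀ j, |e j| ≤ δ := hdev
    set P := univ.filter (fun j => 0 < e j) with hPdef
    set N := univ.filter (fun j => ¬ 0 < e j) with hNdef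
    have hPN : #P + #N = B := by
      rw [hPdef, hNdef, Finset.card_filter_add_card_filter_not, card_univ,
        Fintype.card_fin]
    have hsplit : ∑ j ∈ P, e j + ∑ j ∈ N, e j = 0 := by
      rw [hPdef, hNdef, Finset.sum_filter_add_sum_filter_not]; exact he0
    have hP : ∑ j ∈ P, e j ≤ #P * δ := by
      calc ∑ j ∈ P, e j ≤ ∑ _j ∈ P, δ :=
            Finset.sum_le_sum (fun j _ => (abs_le.mp (habs j)).2)
        _ = #P * δ := by rw [sum_const, nsmul_eq_mul]
    have hN : ∑ j ∈ P, e j ≤ #N * δ := by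
      have h1 : ∑ j ∈ P, e j = ∑ j ∈ N, (- e j) := by
        rw [Finset.sum_neg_distrib]; linarith
      rw [h1]
      calc ∑ j ∈ N, (- e j) ≤ ∑ _j ∈ N, δ :=
            Finset.sum_le_sum (fun j _ => neg_le_of_neg_le (abs_le.mp (habs j)).1)
        _ = #N * δ := by rw [sum_const, nsmul_eq_mul]
    have habs_sum : ∑ j, |e j| = 2 * ∑ j ∈ P, e j := by
      rw [← Finset.sum_filter_add_sum_filter_not univ (fun j => 0 < e j) (fun j => |e j|)]
      have h1 : ∑ j ∈ P, |e j| = ∑ j ∈ P, e j :=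
        Finset.sum_congr rfl (fun j hj => abs_of_pos (Finset.mem_filter.mp hj).2)
      have h2 : ∑ j ∈ N, |e j| = ∑ j ∈ N, (- e j) :=
        Finset.sum_congr rfl (fun j hj =>
          abs_of_nonpos (le_of_not_gt (Finset.mem_filter.mp hj).2))
      rw [h1, h2, Finset.sum_neg_distrib]; linarith
    have hcard : 2 * #P ≤ B - 1 ∨ 2 * #N ≤ B - 1 := by
      obtain ⟨k, hk⟩ := hB; omega
    have h2P : 2 * ∑ j ∈ P, e j ≤ ((B : ℝ) - 1) * δ := by
      rcases hcard with h | h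
      · have h' : (2 * #P : ℝ) ≤ (B : ℝ) - 1 := by
          have := (Nat.cast_le (α := ℝ)).mpr h
          rw [Nat.cast_sub (by omega)] at this; push_cast at this ⊢; linarith
        nlinarith [hP, hδ.le]
      · have h' : (2 * #N : ℝ) ≤ (B : ℝ) - 1 := by
          have := (Nat.cast_le (α := ℝ)).mpr h
          rw [Nat.cast_sub (by omega)] at this; push_cast at this ⊢; linarith
        nlinarith [hN, hδ.le]
    have hA : ∑ j, e j ^ 2 ≤ ((B : ℝ) - 1) * δ ^ 2 := by
      calc ∑ j, e j ^ 2 ≤ ∑ j, δ * |e j| := by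
            refine Finset.sum_le_sum (fun j _ => ?_)
            have h1 := habs j; have h2 := abs_nonneg (e j)
            nlinarith [sq_abs (e j)]
        _ = δ * ∑ j, |e j| := (Finset.mul_sum _ _ _).symm
        _ = δ * (2 * ∑ j ∈ P, e j) := by rw [habs_sum]
        _ ≤ δ * (((B : ℝ) - 1) * δ) := by
            exact mul_le_mul_of_nonneg_left h2P hδ.le
        _ = ((B : ℝ) - 1) * δ ^ 2 := by ring
    have hterm : ∀ j, e j ^ 2 / p₀ j ≤ δ ^ 2 / p₀ j - (δ ^ 2 - e j ^ 2) / ps := by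
      intro j
      have hsq : e j ^ 2 ≤ δ ^ 2 := by
        have h1 := habs j; have h2 := abs_nonneg (e j)
        nlinarith [sq_abs (e j)]
      have hdiv : (δ ^ 2 - e j ^ 2) / ps ≤ (δ ^ 2 - e j ^ 2) / p₀ j := by
        apply div_le_div_of_nonneg_left (by linarith) (hp₀pos j) (hle j)
      have : (δ ^ 2 - e j ^ 2) / p₀ j = δ ^ 2 / p₀ j - e j ^ 2 / p₀ j := by
        rw [sub_div]
      linarith
    calc ∑ j, e j ^ 2 / p₀ j
        ≤ ∑ j, (δ ^ 2 / p₀ j - (δ ^ 2 - e j ^ 2) / ps) :=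
          Finset.sum_le_sum (fun j _ => hterm j)
      _ = δ ^ 2 * (∑ j, 1 / p₀ j) - ((B : ℝ) * δ ^ 2 - ∑ j, e j ^ 2) / ps := by
          rw [Finset.sum_sub_distrib, ← Finset.sum_div, Finset.sum_sub_distrib,
            Finset.sum_const, Finset.card_univ, Fintype.card_fin, nsmul_eq_mul,
            Finset.mul_sum]
          congr 1
          exact Finset.sum_congr rfl (fun j _ => (mul_one_div _ _).symm)
      _ ≤ T := by
          rw [hT, mul_sub]
          have h1 : δ ^ 2 / ps ≤ ((B : ℝ) * δ ^ 2 - ∑ j, e j ^ 2) / ps := by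
            apply div_le_div_of_nonneg_right ?_ hps.le
            have : (3 : ℝ) ≤ (B : ℝ) := by exact_mod_cast hB3
            linarith
          have h2 : δ ^ 2 * (1 / ps) = δ ^ 2 / ps := mul_one_div _ _
          linarith
  -- attainment
  obtain ⟨k, hk⟩ := hB
  set t := univ.erase js with htdef
  have htcard : #t = 2 * k := by
    rw [htdef, card_erase_of_mem (mem_univ js), card_univ, Fintype.card_fin]; omega
  obtain ⟨S, hSt, hScard⟩ := Finset.exists_subset_card_eq (show k ≤ #t by omega)
  set s : Fin B → ℝ := fun j => if j = js then 0 else if j ∈ S then δ else -δ with hsdef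
  set q : Fin B → ℝ := fun j => p₀ j + s j with hqdef
  have hSne : ∀ j ∈ S, j ≠ js := fun j hj =>
    Finset.ne_of_mem_erase (hSt hj)
  have hsum_s : ∑ j, s j = 0 := by
    rw [← Finset.add_sum_erase univ s (mem_univ js), ← htdef,
      ← Finset.sum_sdiff hSt]
    have h1 : s js = 0 := by simp [hsdef]
    have h2 : ∑ j ∈ S, s j = k * δ := by
      rw [Finset.sum_congr rfl (fun j hj => show s j = δ by
        simp [hsdef, hSne j hj, hj]), sum_const, hScard, nsmul_eq_mul]
    have h3 : ∑ j ∈ t \ S, s j = -(k * δ) := by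
      rw [Finset.sum_congr rfl (fun j hj => show s j = -δ by
        have hj1 := (Finset.mem_sdiff.mp hj).1
        have hj2 := (Finset.mem_sdiff.mp hj).2
        simp [hsdef, Finset.ne_of_mem_erase hj1, hj2]), sum_const,
        Finset.card_sdiff_of_subset hSt, htcard, hScard,
        show 2 * k - k = k from by omega, nsmul_eq_mul]
      ring
    rw [h1, h2, h3]; ring
  have hqmem : q ∈ resemblanceSet δ p₀ := by
    refine ⟨fun j => ?_, ?_, fun j => ?_⟩
    · by_cases h1 : j = js
      · simp [hqdef, hsdef, h1]; linarith [hp₀pos js]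
      · by_cases h2 : j ∈ S
        · simp [hqdef, hsdef, h1, h2]; linarith [hp₀pos j, hδ]
        · simp [hqdef, hsdef, h1, h2]; linarith [hδmin j]
    · rw [hqdef]; simp only [Finset.sum_add_distrib, hp₀1, hsum_s]; ring
    · have : q j - p₀ j = s j := by rw [hqdef]; ring
      rw [this]
      by_cases h1 : j = js
      · simp [hsdef, h1]; linarith
      · by_cases h2 : j ∈ S
        · simp [hsdef, h1, h2, abs_of_pos hδ]
        · simp [hsdef, h1, h2, abs_neg, abs_of_pos hδ]
  have hval : ∑ j, (q j - p₀ j) ^ 2 / p₀ j = T := by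
    have hq : ∀ j, (q j - p₀ j) ^ 2 = if j = js then 0 else δ ^ 2 := by
      intro j
      have : q j - p₀ j = s j := by rw [hqdef]; ring
      rw [this]
      by_cases h1 : j = js
      · simp [hsdef, h1]
      · by_cases h2 : j ∈ S
        · simp [hsdef, h1, h2]
        · simp [hsdef, h1, h2]
    rw [← Finset.add_sum_erase univ (fun j => (q j - p₀ j) ^ 2 / p₀ j) (mem_univ js)]
    have h0 : (q js - p₀ js) ^ 2 / p₀ js = 0 := by rw [hq js, if_pos rfl, zero_div]
    have h1 : ∑ j ∈ univ.erase js, (q j - p₀ j) ^ 2 / p₀ j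
        = δ ^ 2 * ∑ j ∈ univ.erase js, 1 / p₀ j := by
      rw [Finset.mul_sum]
      refine Finset.sum_congr rfl fun j hj => ?_
      rw [hq j, if_neg (Finset.ne_of_mem_erase hj), mul_one_div]
    rw [h0, h1, zero_add, hT, Finset.sum_erase_eq_sub (mem_univ js), ← hpsdef]
  have hmem : T ∈ ((fun p : Fin B → ℝ => ∑ j, (p j - p₀ j) ^ 2 / p₀ j) ''
      resemblanceSet δ p₀) := ⟨q, hqmem, hval⟩
  exact le_antisymm (csSup_le ⟨T, hmem⟩ hub) (le_csSup ⟨T, hub⟩ hmem)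
end

section
/- For vectors d ∈ ℝ^B with ∑_j d_j = 0 and |d_j| ≤ δ for all j, the maximum of ∑_j d_j²/p₀_j over such d, when B is even, equals δ² ∑_j 1/p₀_j. -/
open Finset

theorem even_max_weighted_sq_deviation {B : ℕ} (hB : Even B) (hBpos : 0 < B)
    (δ : ℝ) (hδ : 0 < δ) (p₀ : Fin B → ℝ) (hp₀pos : ∀ j, 0 < p₀ j) :
    IsGreatest ((fun d : Fin B → ℝ => ∑ j, (d j) ^ 2 / p₀ j) ''
        {d | (∑ j, d j = 0) ∧ ∀ j, |d j| ≤ δ})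
      (δ ^ 2 * ∑ j, 1 / p₀ j) := by
  constructor
  · refine ⟨fun j => (-1 : ℝ) ^ (j : ℕ) * δ, ⟨?_, ?_⟩, ?_⟩
    · rw [← Finset.sum_mul, Fin.sum_univ_eq_sum_range (fun i => (-1 : ℝ) ^ i),
        neg_one_geom_sum, if_pos hB, zero_mul]
    · intro j
      rw [abs_mul, abs_pow, abs_neg, abs_one, one_pow, one_mul, abs_of_pos hδ]
    · simp only [mul_pow, ← pow_mul, Finset.mul_sum]
      refine Finset.sum_congr rfl fun j _ => ?_
      rw [mul_comm (j:ℕ) 2, pow_mul, neg_one_sq, one_pow, one_mul,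
        mul_one_div]
  · rintro x ⟨d, ⟨-, hd⟩, rfl⟩
    simp only
    rw [Finset.mul_sum]
    refine Finset.sum_le_sum fun j _ => ?_
    rw [mul_one_div]
    refine (div_le_div_iff_of_pos_right (hp₀pos j)).mpr ?_
    calc (d j) ^ 2 = |d j| ^ 2 := (sq_abs _).symm
      _ ≤ δ ^ 2 := pow_le_pow_left₀ (abs_nonneg _) (hd j) 2
end
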